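/- arXiv:1607.00743 — 4 statements merged into one kernel-verified Lean document; each statement's English description precedes it below -/
import Mathlib

section
/- Link between bootstrap consistency and mean-squared prediction error: Fix X ∈ ℝ^{n×p} and let β̂ : ℝⁿ → ℝ^p be any measurable estimator applied to Y = Xβ + ε. Let ê = Y − Xβ̂(Y) be its residuals, ē = (1/n)∑ᵢ êᵢ, and let F̂ be the empirical distribution placing mass 1/n at each êᵢ − ē. Let Fₙ be the empirical distribution placing mass 1/n at each εᵢ. Then for every n ≥ 1, E[ d₂²(F̂, F₀) ] ≤ 2·mspe(β̂|X) + 2·E[ d₂²(Fₙ, F₀) ] + 2σ²/n, where the expectations are over ε with i.i.d. coordinates of law F₀. -/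
open MeasureTheory Matrix
open scoped ENNReal NNReal
open scoped ProbabilityTheory

/-- Squared Mallows (Wasserstein-2) distance between two measures, defined as the
infimum over couplings of the expected squared distance (in `ℝ≥0∞`). -/
noncomputable def d2sq {E : Type*} [MeasurableSpace E] [NormedAddCommGroup E]
    (μ ν : Measure E) : ℝ≥0∞ :=
  ⨅ (π : Measure (E × E)) (_ : π.map Prod.fst = μ ∧ π.map Prod.snd = ν),
    ∫⁻ x, (‖x.1 - x.2‖₊ : ℝ≥0∞) ^ 2 ∂π

/-- The empirical distribution placing mass `1/n` at each `v i`. -/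
noncomputable def empiricalMeasure {n : ℕ} (v : Fin n → ℝ) : Measure ℝ :=
  (n : ℝ≥0∞)⁻¹ • ∑ i, Measure.dirac (v i)


section Aux

lemma enn_sq (z : ℝ) : ((‖z‖₊ : ℝ≥0∞)) ^ 2 = ENNReal.ofReal (z ^ 2) := by
  rw [← enorm_eq_nnnorm, Real.enorm_eq_ofReal_abs, ← ENNReal.ofReal_pow (abs_nonneg z), sq_abs]


lemma lintegral_empirical {n : ℕ} (v : Fin n → ℝ) (f : ℝ → ℝ≥0∞) :
    ∫⁻ x, f x ∂(empiricalMeasure v) = (n : ℝ≥0∞)⁻¹ * ∑ i, f (v i) := by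
  rw [empiricalMeasure, lintegral_smul_measure, lintegral_finset_sum_measure]
  simp [lintegral_dirac]

lemma empirical_apply {n : ℕ} (v : Fin n → ℝ) (s : Set ℝ) :
    empiricalMeasure v s = (n : ℝ≥0∞)⁻¹ * ∑ i, (Measure.dirac (v i)) s := by
  rw [empiricalMeasure, Measure.smul_apply, Measure.finset_sum_apply, smul_eq_mul]

instance empirical_prob {n : ℕ} [NeZero n] (v : Fin n → ℝ) :
    IsProbabilityMeasure (empiricalMeasure v) := by
  constructor
  rw [empirical_apply]
  simp only [MeasurableSet.univ, Measure.dirac_apply', Set.indicator_univ, Set.mem_univ,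
    if_true, Pi.one_apply, Finset.sum_const, Finset.card_univ, Fintype.card_fin, nsmul_eq_mul, mul_one]
  exact ENNReal.inv_mul_cancel (Nat.cast_ne_zero.mpr (NeZero.ne n)) (ENNReal.natCast_ne_top n)


lemma cost_meas : Measurable fun x : ℝ × ℝ => ENNReal.ofReal ((x.1 - x.2) ^ 2) :=
  ENNReal.measurable_ofReal.comp ((measurable_fst.sub measurable_snd).pow_const 2)

lemma coupling_step {n : ℕ} [NeZero n] (v w : Fin n → ℝ) (F₀ : Measure ℝ)
    [IsProbabilityMeasure F₀] (π : Measure (ℝ × ℝ))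
    (hfst : π.map Prod.fst = empiricalMeasure w) (hsnd : π.map Prod.snd = F₀) :
    d2sq (empiricalMeasure v) F₀ ≤
      2 * ((n : ℝ≥0∞)⁻¹ * ∑ i, ENNReal.ofReal ((v i - w i) ^ 2))
        + 2 * ∫⁻ x, ENNReal.ofReal ((x.1 - x.2) ^ 2) ∂π := by
  haveI : IsProbabilityMeasure π := by
    constructor
    have h := congrArg (fun μ : Measure ℝ => μ Set.univ) hfst
    simp only [Measure.map_apply measurable_fst MeasurableSet.univ, Set.preimage_univ] at h
    rw [h]; exact measure_univ
  have hπfst : π.fst = empiricalMeasure w := by rw [← hfst]; rfl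
  have hdis : π.fst ⊗ₘ π.condKernel = π := π.disintegrate _
  set κ := π.condKernel with hκ
  -- second marginal identity
  have hF0 : ∀ s : Set ℝ, MeasurableSet s → (n : ℝ≥0∞)⁻¹ * ∑ i, κ (w i) s = F₀ s := by
    intro s hs
    have h2 : π.map Prod.snd s = F₀ s := by rw [hsnd]
    rw [Measure.map_apply measurable_snd hs] at h2
    have hp : Prod.snd ⁻¹' s = (Set.univ ×ˢ s : Set (ℝ × ℝ)) := by ext x; simp
    rw [hp, ← hdis, Measure.compProd_apply_prod MeasurableSet.univ hs,
      setLIntegral_univ, hπfst, lintegral_empirical] at h2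
    exact h2
  -- cost of π as iterated integral
  have hcost : ∫⁻ x, ENNReal.ofReal ((x.1 - x.2) ^ 2) ∂π
      = (n : ℝ≥0∞)⁻¹ * ∑ i, ∫⁻ y, ENNReal.ofReal ((w i - y) ^ 2) ∂(κ (w i)) := by
    conv_lhs => rw [← hdis]
    rw [Measure.lintegral_compProd cost_meas, hπfst, lintegral_empirical]
  -- the new coupling
  set π' : Measure (ℝ × ℝ) := (n : ℝ≥0∞)⁻¹ • ∑ i, (Measure.dirac (v i)).prod (κ (w i)) with hπ'
  have hfst' : π'.map Prod.fst = empiricalMeasure v := by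
    ext s hs
    rw [Measure.map_apply measurable_fst hs, hπ', Measure.smul_apply,
      Measure.finset_sum_apply, smul_eq_mul, empirical_apply]
    congr 1
    refine Finset.sum_congr rfl fun i _ => ?_
    have hp : Prod.fst ⁻¹' s = (s ×ˢ Set.univ : Set (ℝ × ℝ)) := by ext x; simp
    rw [hp, Measure.prod_prod, measure_univ, mul_one]
  have hsnd' : π'.map Prod.snd = F₀ := by
    ext s hs
    rw [Measure.map_apply measurable_snd hs, hπ', Measure.smul_apply,
      Measure.finset_sum_apply, smul_eq_mul, ← hF0 s hs]
    congr 1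
    refine Finset.sum_congr rfl fun i _ => ?_
    have hp : Prod.snd ⁻¹' s = (Set.univ ×ˢ s : Set (ℝ × ℝ)) := by ext x; simp
    rw [hp, Measure.prod_prod, measure_univ, one_mul]
  have hle : d2sq (empiricalMeasure v) F₀ ≤ ∫⁻ x, (‖x.1 - x.2‖₊ : ℝ≥0∞) ^ 2 ∂π' :=
    iInf₂_le π' ⟨hfst', hsnd'⟩
  simp only [enn_sq] at hle
  refine hle.trans ?_
  have hπ'cost : ∫⁻ x, ENNReal.ofReal ((x.1 - x.2) ^ 2) ∂π'
      = (n : ℝ≥0∞)⁻¹ * ∑ i, ∫⁻ y, ENNReal.ofReal ((v i - y) ^ 2) ∂(κ (w i)) := by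
    rw [hπ', lintegral_smul_measure, lintegral_finset_sum_measure]
    congr 1
    refine Finset.sum_congr rfl fun i _ => ?_
    rw [lintegral_prod _ cost_meas.aemeasurable, lintegral_dirac]
  rw [hπ'cost]
  have hbound : ∀ i : Fin n, ∫⁻ y, ENNReal.ofReal ((v i - y) ^ 2) ∂(κ (w i))
      ≤ 2 * ENNReal.ofReal ((v i - w i) ^ 2)
        + 2 * ∫⁻ y, ENNReal.ofReal ((w i - y) ^ 2) ∂(κ (w i)) := by
    intro i
    have hmeas2 : Measurable fun y : ℝ => ENNReal.ofReal ((w i - y) ^ 2) :=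
      ENNReal.measurable_ofReal.comp ((measurable_const.sub measurable_id).pow_const 2)
    calc ∫⁻ y, ENNReal.ofReal ((v i - y) ^ 2) ∂(κ (w i))
        ≤ ∫⁻ y, (2 * ENNReal.ofReal ((v i - w i) ^ 2)
            + 2 * ENNReal.ofReal ((w i - y) ^ 2)) ∂(κ (w i)) := by
          refine lintegral_mono fun y => ?_
          have h1 : (v i - y) ^ 2 ≤ 2 * (v i - w i) ^ 2 + 2 * (w i - y) ^ 2 := by nlinarith [sq_nonneg ((v i - w i) - (w i - y))]
          calc ENNReal.ofReal ((v i - y) ^ 2)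
              ≤ ENNReal.ofReal (2 * (v i - w i) ^ 2 + 2 * (w i - y) ^ 2) :=
                ENNReal.ofReal_le_ofReal h1
            _ = 2 * ENNReal.ofReal ((v i - w i) ^ 2) + 2 * ENNReal.ofReal ((w i - y) ^ 2) := by
                rw [ENNReal.ofReal_add (by positivity) (by positivity),
                  ENNReal.ofReal_mul (by norm_num), ENNReal.ofReal_mul (by norm_num)]
                norm_num
      _ = 2 * ENNReal.ofReal ((v i - w i) ^ 2)
            + 2 * ∫⁻ y, ENNReal.ofReal ((w i - y) ^ 2) ∂(κ (w i)) := by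
          rw [lintegral_add_left measurable_const, lintegral_const, measure_univ, mul_one,
            lintegral_const_mul _ hmeas2]
  calc (n : ℝ≥0∞)⁻¹ * ∑ i, ∫⁻ y, ENNReal.ofReal ((v i - y) ^ 2) ∂(κ (w i))
      ≤ (n : ℝ≥0∞)⁻¹ * ∑ i, (2 * ENNReal.ofReal ((v i - w i) ^ 2)
          + 2 * ∫⁻ y, ENNReal.ofReal ((w i - y) ^ 2) ∂(κ (w i))) := by
        exact mul_le_mul_right (Finset.sum_le_sum fun i _ => hbound i) _
    _ = 2 * ((n : ℝ≥0∞)⁻¹ * ∑ i, ENNReal.ofReal ((v i - w i) ^ 2))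
        + 2 * ((n : ℝ≥0∞)⁻¹ * ∑ i, ∫⁻ y, ENNReal.ofReal ((w i - y) ^ 2) ∂(κ (w i))) := by
        rw [Finset.sum_add_distrib, ← Finset.mul_sum, ← Finset.mul_sum]; ring
    _ = _ := by rw [hcost]

lemma coupling_bound {n : ℕ} [NeZero n] (v w : Fin n → ℝ) (F₀ : Measure ℝ)
    [IsProbabilityMeasure F₀] :
    d2sq (empiricalMeasure v) F₀ ≤
      2 * ((n : ℝ≥0∞)⁻¹ * ∑ i, ENNReal.ofReal ((v i - w i) ^ 2))
        + 2 * d2sq (empiricalMeasure w) F₀ := by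
  by_cases htop : d2sq (empiricalMeasure w) F₀ = ⊤
  · rw [htop]
    simp [ENNReal.mul_top]
  refine ENNReal.le_of_forall_pos_le_add fun ε hε _ => ?_
  have hδ : d2sq (empiricalMeasure w) F₀ < d2sq (empiricalMeasure w) F₀ + (ε : ℝ≥0∞) / 2 :=
    ENNReal.lt_add_right htop (by simp [ENNReal.div_eq_zero_iff, hε.ne'])
  rw [d2sq] at hδ
  obtain ⟨π, hπ⟩ := iInf_lt_iff.mp hδ
  obtain ⟨hc, hπ⟩ := iInf_lt_iff.mp hπ
  rw [← d2sq] at hπ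
  have := coupling_step v w F₀ π hc.1 hc.2
  have hπ' : ∫⁻ x, ENNReal.ofReal ((x.1 - x.2) ^ 2) ∂π
      < d2sq (empiricalMeasure w) F₀ + (ε : ℝ≥0∞) / 2 := by
    rw [lintegral_congr fun x : ℝ × ℝ => (enn_sq (x.1 - x.2)).symm]
    exact hπ
  calc d2sq (empiricalMeasure v) F₀
      ≤ 2 * ((n : ℝ≥0∞)⁻¹ * ∑ i, ENNReal.ofReal ((v i - w i) ^ 2))
        + 2 * ∫⁻ x, ENNReal.ofReal ((x.1 - x.2) ^ 2) ∂π := this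
    _ ≤ 2 * ((n : ℝ≥0∞)⁻¹ * ∑ i, ENNReal.ofReal ((v i - w i) ^ 2))
        + 2 * (d2sq (empiricalMeasure w) F₀ + (ε : ℝ≥0∞) / 2) := by
        gcongr
    _ = 2 * ((n : ℝ≥0∞)⁻¹ * ∑ i, ENNReal.ofReal ((v i - w i) ^ 2))
        + 2 * d2sq (empiricalMeasure w) F₀ + (ε : ℝ≥0∞) := by
        rw [mul_add, ← add_assoc, ENNReal.mul_div_cancel' (by norm_num) (by norm_num)]

variable (F₀ : Measure ℝ) [IsProbabilityMeasure F₀]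

lemma pi_integral_eval {m : ℕ} (i : Fin (m + 1)) (f : ℝ → ℝ) :
    ∫ x, f (x i) ∂(Measure.pi fun _ : Fin (m + 1) => F₀) = ∫ y, f y ∂F₀ := by
  have hmp := measurePreserving_piFinSuccAbove (fun _ : Fin (m + 1) => F₀) i
  have h := hmp.integral_comp' (fun p : ℝ × (Fin m → ℝ) => f p.1)
  rw [show (fun x : Fin (m + 1) → ℝ => f (x i)) = fun x : Fin (m + 1) → ℝ =>
    f ((MeasurableEquiv.piFinSuccAbove (fun _ => ℝ) i x).1) from rfl]
  rw [h]
  have h2 := integral_prod_mul (μ := F₀) (ν := Measure.pi fun _ : Fin m => F₀) f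
    (fun _ => (1 : ℝ))
  simpa using h2

lemma pi_integral_eval_mul {m : ℕ} (i j : Fin (m + 1)) (hij : j ≠ i) (f g : ℝ → ℝ) :
    ∫ x, f (x i) * g (x j) ∂(Measure.pi fun _ : Fin (m + 1) => F₀)
      = (∫ y, f y ∂F₀) * ∫ y, g y ∂F₀ := by
  obtain ⟨j', rfl⟩ := Fin.exists_succAbove_eq hij
  have hmp := measurePreserving_piFinSuccAbove (fun _ : Fin (m + 1) => F₀) i
  have h := hmp.integral_comp' (fun p : ℝ × (Fin m → ℝ) => f p.1 * g (p.2 j'))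
  rw [show (fun x : Fin (m + 1) → ℝ => f (x i) * g (x (i.succAbove j'))) =
    fun x : Fin (m + 1) → ℝ => f ((MeasurableEquiv.piFinSuccAbove (fun _ => ℝ) i x).1)
      * g ((MeasurableEquiv.piFinSuccAbove (fun _ => ℝ) i x).2 j') from rfl]
  rw [h, integral_prod_mul f (fun z : Fin m → ℝ => g (z j'))]
  congr 1
  cases m with
  | zero => exact j'.elim0
  | succ m' => exact pi_integral_eval F₀ j' g

lemma pi_integrable_eval {m : ℕ} (i : Fin (m + 1)) {f : ℝ → ℝ} (hf : Integrable f F₀) :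
    Integrable (fun x => f (x i)) (Measure.pi fun _ : Fin (m + 1) => F₀) := by
  have hmp := measurePreserving_piFinSuccAbove (fun _ : Fin (m + 1) => F₀) i
  have hemb := (MeasurableEquiv.piFinSuccAbove (fun _ : Fin (m + 1) => ℝ) i).measurableEmbedding
  have h : Integrable (fun p : ℝ × (Fin m → ℝ) => f p.1)
      (F₀.prod (Measure.pi fun _ : Fin m => F₀)) := by
    simpa using hf.mul_prod (integrable_const (1 : ℝ))
  exact (hmp.integrable_comp_emb hemb).mpr h

lemma pi_integrable_eval_mul {m : ℕ} (i j : Fin (m + 1)) (hij : j ≠ i) {f g : ℝ → ℝ}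
    (hf : Integrable f F₀) (hg : Integrable g F₀) :
    Integrable (fun x => f (x i) * g (x j)) (Measure.pi fun _ : Fin (m + 1) => F₀) := by
  obtain ⟨j', rfl⟩ := Fin.exists_succAbove_eq hij
  have hmp := measurePreserving_piFinSuccAbove (fun _ : Fin (m + 1) => F₀) i
  have hemb := (MeasurableEquiv.piFinSuccAbove (fun _ : Fin (m + 1) => ℝ) i).measurableEmbedding
  have hg' : Integrable (fun z : Fin m → ℝ => g (z j')) (Measure.pi fun _ : Fin m => F₀) := by
    cases m with
    | zero => exact j'.elim0
    | succ m' => exact pi_integrable_eval F₀ j' hg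
  have h : Integrable (fun p : ℝ × (Fin m → ℝ) => f p.1 * g (p.2 j'))
      (F₀.prod (Measure.pi fun _ : Fin m => F₀)) := hf.mul_prod hg'
  exact (hmp.integrable_comp_emb hemb).mpr h

lemma integrable_id' (hm2 : Integrable (fun x : ℝ => x ^ 2) F₀) :
    Integrable (fun x : ℝ => x) F₀ := by
  refine Integrable.mono' (hm2.add (integrable_const 1)) measurable_id.aestronglyMeasurable ?_
  filter_upwards with y
  simp only [Real.norm_eq_abs, Pi.add_apply]
  nlinarith [sq_nonneg (|y| - 1), sq_abs y, abs_nonneg y]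

lemma integrable_sum_sq {m : ℕ} (hm2 : Integrable (fun x : ℝ => x ^ 2) F₀) :
    Integrable (fun x : Fin (m + 1) → ℝ => (∑ i, x i) ^ 2)
      (Measure.pi fun _ : Fin (m + 1) => F₀) := by
  have hid := integrable_id' F₀ hm2
  have h : ∀ i j : Fin (m + 1), Integrable (fun x : Fin (m + 1) → ℝ => x i * x j)
      (Measure.pi fun _ : Fin (m + 1) => F₀) := by
    intro i j
    by_cases hij : j = i
    · subst hij
      have := pi_integrable_eval F₀ j (f := fun y => y * y) (by
        simpa [sq] using hm2)
      simpa using this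
    · exact pi_integrable_eval_mul F₀ i j hij hid hid
  have : (fun x : Fin (m + 1) → ℝ => (∑ i, x i) ^ 2)
      = fun x : Fin (m + 1) → ℝ => ∑ i, ∑ j, x i * x j := by
    funext x
    rw [sq, Finset.sum_mul_sum]
  rw [this]
  exact integrable_finset_sum _ fun i _ => integrable_finset_sum _ fun j _ => h i j

lemma integral_sum_sq {m : ℕ} {σ2 : ℝ}
    (hmean : ∫ x, x ∂F₀ = 0) (hvar : ∫ x, x ^ 2 ∂F₀ = σ2)
    (hm2 : Integrable (fun x : ℝ => x ^ 2) F₀) :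
    ∫ x, (∑ i, x i) ^ 2 ∂(Measure.pi fun _ : Fin (m + 1) => F₀) = (m + 1) * σ2 := by
  have hid := integrable_id' F₀ hm2
  have h : ∀ i j : Fin (m + 1), Integrable (fun x : Fin (m + 1) → ℝ => x i * x j)
      (Measure.pi fun _ : Fin (m + 1) => F₀) := by
    intro i j
    by_cases hij : j = i
    · subst hij
      simpa using pi_integrable_eval F₀ j (f := fun y => y * y) (by simpa [sq] using hm2)
    · exact pi_integrable_eval_mul F₀ i j hij hid hid
  have hrw : (fun x : Fin (m + 1) → ℝ => (∑ i, x i) ^ 2)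
      = fun x : Fin (m + 1) → ℝ => ∑ i, ∑ j, x i * x j := by
    funext x; rw [sq, Finset.sum_mul_sum]
  rw [hrw, integral_finset_sum _ fun i _ => integrable_finset_sum _ fun j _ => h i j]
  have : ∀ i : Fin (m + 1), ∫ x, ∑ j, x i * x j ∂(Measure.pi fun _ : Fin (m + 1) => F₀)
      = σ2 := by
    intro i
    rw [integral_finset_sum _ fun j _ => h i j]
    have hterm : ∀ j : Fin (m + 1), ∫ x, x i * x j ∂(Measure.pi fun _ : Fin (m + 1) => F₀)
        = if j = i then σ2 else 0 := by
      intro j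
      by_cases hij : j = i
      · subst hij
        rw [if_pos rfl]
        have := pi_integral_eval F₀ j (fun y => y * y)
        simpa [← sq, hvar] using this
      · rw [if_neg hij]
        rw [pi_integral_eval_mul F₀ i j hij (fun y => y) (fun y => y), hmean, zero_mul]
    simp only [hterm]
    simp
  simp only [this]
  simp [mul_comm]

lemma key_alg {n : ℕ} (hn : 1 ≤ n) (a e : Fin n → ℝ) :
    ∑ i, ((e i - a i) - (∑ j, (e j - a j)) / n - e i) ^ 2
      ≤ ∑ i, a i ^ 2 + n * ((∑ j, e j) / n) ^ 2 := by
  have hn' : (0 : ℝ) < n := by exact_mod_cast hn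
  set S := ∑ j, a j with hS
  set T := ∑ j, e j with hT
  have hsub : ∑ j, (e j - a j) = T - S := by rw [Finset.sum_sub_distrib]
  have expand : ∀ i : Fin n, ((e i - a i) - (∑ j, (e j - a j)) / n - e i) ^ 2
      = a i ^ 2 + (2 * ((T - S) / n)) * a i + ((T - S) / n) ^ 2 := by
    intro i; rw [hsub]; ring
  rw [Finset.sum_congr rfl fun i _ => expand i, Finset.sum_add_distrib,
    Finset.sum_add_distrib, ← Finset.mul_sum, Finset.sum_const, Finset.card_univ,
    Fintype.card_fin, nsmul_eq_mul, ← hS]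
  have h : 2 * ((T - S) / n) * S + (n : ℝ) * ((T - S) / n) ^ 2 - (n : ℝ) * (T / n) ^ 2
      = -(S ^ 2) / n := by
    field_simp
    ring
  rw [neg_div] at h
  have h2 : (0 : ℝ) ≤ S ^ 2 / n := div_nonneg (sq_nonneg S) hn'.le
  linarith

lemma lintegral_barsq {m : ℕ} {σ2 : ℝ}
    (hmean : ∫ x, x ∂F₀ = 0) (hvar : ∫ x, x ^ 2 ∂F₀ = σ2)
    (hm2 : Integrable (fun x : ℝ => x ^ 2) F₀) :
    ∫⁻ x, ENNReal.ofReal (((∑ i, x i) / ((m + 1 : ℕ) : ℝ)) ^ 2)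
        ∂(Measure.pi fun _ : Fin (m + 1) => F₀)
      = ENNReal.ofReal (σ2 / ((m + 1 : ℕ) : ℝ)) := by
  have hint : Integrable (fun x : Fin (m + 1) → ℝ => ((∑ i, x i) / ((m + 1 : ℕ) : ℝ)) ^ 2)
      (Measure.pi fun _ : Fin (m + 1) => F₀) := by
    have := (integrable_sum_sq F₀ (m := m) hm2).div_const (((m + 1 : ℕ) : ℝ) ^ 2)
    simpa [div_pow] using this
  rw [← ofReal_integral_eq_lintegral_ofReal hint
    (Filter.Eventually.of_forall fun x => sq_nonneg _)]
  congr 1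
  have h1 : ∫ x, ((∑ i, x i) / ((m + 1 : ℕ) : ℝ)) ^ 2
        ∂(Measure.pi fun _ : Fin (m + 1) => F₀)
      = (∫ x, (∑ i, x i) ^ 2 ∂(Measure.pi fun _ : Fin (m + 1) => F₀))
          / ((m + 1 : ℕ) : ℝ) ^ 2 := by
    simp_rw [div_pow]
    exact integral_div _ _
  rw [h1, integral_sum_sq F₀ hmean hvar hm2]
  have hpos : (0 : ℝ) < ((m + 1 : ℕ) : ℝ) := by positivity
  rw [sq]
  push_cast
  field_simp

end Aux

/-- **Link between bootstrap consistency and mean-squared prediction error.**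
For any measurable estimator `β̂` applied to `Y = Xβ + ε` with `ε` having i.i.d.
coordinates of law `F₀` (mean `0`, variance `σ²`), letting `F̂` be the empirical
distribution of the centered residuals `ê_i − ē` and `Fₙ` the empirical distribution
of the `ε_i`, one has
`E[d₂²(F̂,F₀)] ≤ 2·mspe(β̂|X) + 2·E[d₂²(Fₙ,F₀)] + 2σ²/n`. -/
theorem bootstrap_mspe_link
    {n p : ℕ} (hn : 1 ≤ n) (X : Matrix (Fin n) (Fin p) ℝ) (β : Fin p → ℝ)
    (betaHat : (Fin n → ℝ) → (Fin p → ℝ)) (hmeas : Measurable betaHat)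
    (F₀ : Measure ℝ) [IsProbabilityMeasure F₀]
    (σ2 : ℝ) (hσ2 : 0 < σ2)
    (hmean : ∫ x, x ∂F₀ = 0) (hvar : ∫ x, x ^ 2 ∂F₀ = σ2)
    (hm2 : Integrable (fun x => x ^ 2) F₀) :
    (∫⁻ ε, d2sq
        (empiricalMeasure (fun i =>
          ((X *ᵥ β + ε) - X *ᵥ betaHat (X *ᵥ β + ε)) i
            - (∑ j, ((X *ᵥ β + ε) - X *ᵥ betaHat (X *ᵥ β + ε)) j) / n))
        F₀ ∂(Measure.pi fun _ : Fin n => F₀))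
      ≤ 2 * ((n : ℝ≥0∞)⁻¹ *
            ∫⁻ ε, ENNReal.ofReal
              (∑ i, ((X *ᵥ betaHat (X *ᵥ β + ε)) i - (X *ᵥ β) i) ^ 2)
              ∂(Measure.pi fun _ : Fin n => F₀))
        + 2 * (∫⁻ ε, d2sq (empiricalMeasure ε) F₀ ∂(Measure.pi fun _ : Fin n => F₀))
        + ENNReal.ofReal (2 * σ2 / n) := by
  obtain ⟨m, rfl⟩ : ∃ m, n = m + 1 := ⟨n - 1, by omega⟩
  set P := Measure.pi fun _ : Fin (m + 1) => F₀ with hP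
  set a : (Fin (m + 1) → ℝ) → Fin (m + 1) → ℝ :=
    fun ε i => (X *ᵥ betaHat (X *ᵥ β + ε)) i - (X *ᵥ β) i with ha
  have hcast : ((m + 1 : ℕ) : ℝ≥0∞) ≠ 0 := by simp
  have hcast' : ((m + 1 : ℕ) : ℝ≥0∞) ≠ ⊤ := ENNReal.natCast_ne_top _
  -- pointwise bound
  have point : ∀ ε : Fin (m + 1) → ℝ,
      d2sq (empiricalMeasure (fun i =>
          ((X *ᵥ β + ε) - X *ᵥ betaHat (X *ᵥ β + ε)) i
            - (∑ j, ((X *ᵥ β + ε) - X *ᵥ betaHat (X *ᵥ β + ε)) j) / (m + 1 : ℕ))) F₀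
        ≤ 2 * (((m + 1 : ℕ) : ℝ≥0∞)⁻¹ * ENNReal.ofReal (∑ i, a ε i ^ 2))
          + 2 * ENNReal.ofReal (((∑ i, ε i) / ((m + 1 : ℕ) : ℝ)) ^ 2)
          + 2 * d2sq (empiricalMeasure ε) F₀ := by
    intro ε
    set v : Fin (m + 1) → ℝ := fun i =>
      ((X *ᵥ β + ε) - X *ᵥ betaHat (X *ᵥ β + ε)) i
        - (∑ j, ((X *ᵥ β + ε) - X *ᵥ betaHat (X *ᵥ β + ε)) j) / (m + 1 : ℕ) with hv
    have hcb := coupling_bound (n := m + 1) v ε F₀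
    refine hcb.trans ?_
    have hsum' : ∑ j, ((X *ᵥ β + ε) - X *ᵥ betaHat (X *ᵥ β + ε)) j
        = ∑ j, (ε j - a ε j) := by
      refine Finset.sum_congr rfl fun j _ => ?_
      simp only [Pi.sub_apply, Pi.add_apply, ha]
      ring
    have hptwise : ∀ i, v i - ε i
        = (ε i - a ε i) - (∑ j, (ε j - a ε j)) / ((m + 1 : ℕ) : ℝ) - ε i := by
      intro i
      simp only [hv]
      rw [hsum']
      simp only [Pi.sub_apply, Pi.add_apply, ha]
      ring
    have halg : ∑ i, (v i - ε i) ^ 2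
        ≤ ∑ i, a ε i ^ 2 + ((m + 1 : ℕ) : ℝ) * ((∑ j, ε j) / ((m + 1 : ℕ) : ℝ)) ^ 2 := by
      rw [Finset.sum_congr rfl fun i _ => by rw [hptwise i]]
      exact key_alg (by omega) (a ε) ε
    have hofReal : ∑ i, ENNReal.ofReal ((v i - ε i) ^ 2)
        ≤ ENNReal.ofReal (∑ i, a ε i ^ 2)
          + ((m + 1 : ℕ) : ℝ≥0∞) * ENNReal.ofReal (((∑ j, ε j) / ((m + 1 : ℕ) : ℝ)) ^ 2) := by
      rw [← ENNReal.ofReal_sum_of_nonneg fun i _ => sq_nonneg _]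
      refine (ENNReal.ofReal_le_ofReal halg).trans ?_
      rw [ENNReal.ofReal_add (by positivity) (by positivity),
        ENNReal.ofReal_mul (by positivity), ENNReal.ofReal_natCast]
    calc 2 * (((m + 1 : ℕ) : ℝ≥0∞)⁻¹ * ∑ i, ENNReal.ofReal ((v i - ε i) ^ 2))
          + 2 * d2sq (empiricalMeasure ε) F₀
        ≤ 2 * (((m + 1 : ℕ) : ℝ≥0∞)⁻¹ * (ENNReal.ofReal (∑ i, a ε i ^ 2)
            + ((m + 1 : ℕ) : ℝ≥0∞) * ENNReal.ofReal (((∑ j, ε j) / ((m + 1 : ℕ) : ℝ)) ^ 2)))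
          + 2 * d2sq (empiricalMeasure ε) F₀ := by gcongr
      _ = 2 * (((m + 1 : ℕ) : ℝ≥0∞)⁻¹ * ENNReal.ofReal (∑ i, a ε i ^ 2))
          + 2 * ENNReal.ofReal (((∑ i, ε i) / ((m + 1 : ℕ) : ℝ)) ^ 2)
          + 2 * d2sq (empiricalMeasure ε) F₀ := by
          rw [mul_add (((m + 1 : ℕ) : ℝ≥0∞))⁻¹, ← mul_assoc (((m + 1 : ℕ) : ℝ≥0∞))⁻¹,
            ENNReal.inv_mul_cancel hcast hcast', one_mul, mul_add]
  refine (lintegral_mono point).trans ?_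
  -- measurability
  have hq : Measurable fun ε : Fin (m + 1) → ℝ => ENNReal.ofReal (∑ i, a ε i ^ 2) := by
    apply ENNReal.measurable_ofReal.comp
    apply Finset.measurable_sum
    intro i _
    have h1 : Measurable fun ε : Fin (m + 1) → ℝ => betaHat (X *ᵥ β + ε) :=
      hmeas.comp (measurable_const.add measurable_id)
    have h2 : Measurable fun u : Fin p → ℝ => (X *ᵥ u) i := by
      simp only [mulVec, dotProduct]
      exact Finset.measurable_sum _ fun k _ => (measurable_pi_apply k).const_mul _
    exact ((h2.comp h1).sub measurable_const).pow_const 2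
  have hg : Measurable fun ε : Fin (m + 1) → ℝ =>
      ENNReal.ofReal (((∑ i, ε i) / ((m + 1 : ℕ) : ℝ)) ^ 2) :=
    ENNReal.measurable_ofReal.comp
      (((Finset.measurable_sum _ fun i _ => measurable_pi_apply i).div_const _).pow_const 2)
  have hFmeas : Measurable fun ε : Fin (m + 1) → ℝ =>
      2 * (((m + 1 : ℕ) : ℝ≥0∞)⁻¹ * ENNReal.ofReal (∑ i, a ε i ^ 2)) :=
    (hq.const_mul _).const_mul 2
  have hGmeas : Measurable fun ε : Fin (m + 1) → ℝ =>
      2 * ENNReal.ofReal (((∑ i, ε i) / ((m + 1 : ℕ) : ℝ)) ^ 2) := hg.const_mul 2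
  rw [lintegral_add_left (show Measurable fun ε : Fin (m + 1) → ℝ =>
      2 * (((m + 1 : ℕ) : ℝ≥0∞)⁻¹ * ENNReal.ofReal (∑ i, a ε i ^ 2))
        + 2 * ENNReal.ofReal (((∑ i, ε i) / ((m + 1 : ℕ) : ℝ)) ^ 2) from hFmeas.add hGmeas),
    lintegral_add_left hFmeas]
  have hF : ∫⁻ ε, 2 * (((m + 1 : ℕ) : ℝ≥0∞)⁻¹ * ENNReal.ofReal (∑ i, a ε i ^ 2)) ∂P
      = 2 * (((m + 1 : ℕ) : ℝ≥0∞)⁻¹ * ∫⁻ ε, ENNReal.ofReal (∑ i, a ε i ^ 2) ∂P) := by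
    rw [lintegral_const_mul' 2 _ (by norm_num),
      lintegral_const_mul' _ _ (ENNReal.inv_ne_top.2 hcast)]
  have hG : ∫⁻ ε, 2 * ENNReal.ofReal (((∑ i, ε i) / ((m + 1 : ℕ) : ℝ)) ^ 2) ∂P
      = ENNReal.ofReal (2 * σ2 / ((m + 1 : ℕ) : ℝ)) := by
    rw [lintegral_const_mul' 2 _ (by norm_num), hP, lintegral_barsq F₀ hmean hvar hm2]
    rw [mul_div_assoc, ENNReal.ofReal_mul (by norm_num)]
    norm_num
  have hH : ∫⁻ ε, 2 * d2sq (empiricalMeasure ε) F₀ ∂P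
      = 2 * ∫⁻ ε, d2sq (empiricalMeasure ε) F₀ ∂P :=
    lintegral_const_mul' 2 _ (by norm_num)
  rw [hF, hG, hH]
  apply le_of_eq
  ring
end

section
/- Ridge variance sum rate for fast eigenvalue decay: Let ν > 1/2, 0 < θ ≤ ν, and let l₁ ≥ l₂ ≥ … ≥ l_m > 0 with m = min(n,p) and k₃ n ≤ p ≤ k₄ n, satisfy κ₁ i^{-ν} ≤ l_i ≤ κ₂ i^{-ν} for all i = 1,…,m (constants κ₁, κ₂ > 0, 0 < k₃ ≤ k₄). Then there exist constants c, C > 0 and n₀ ≥ 1 depending only on (κ₁, κ₂, ν, θ, k₃, k₄) such that for all n ≥ n₀: c·n^{(θ−ν)/ν} ≤ (1/n)·∑_{i=1}^{m} ( l_i / (l_i + n^{-θ}) )² ≤ C·n^{(θ−ν)/ν}. -/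
open scoped BigOperators

open Finset

lemma step_rpow (r : ℝ) (hr : 1 < r) (x : ℝ) (hx : 1 ≤ x) :
    (r - 1) * (x + 1) ^ (-r) ≤ x ^ (1 - r) - (x + 1) ^ (1 - r) := by
  have hx0 : (0:ℝ) < x := lt_of_lt_of_le one_pos hx
  have hlt : x < x + 1 := by linarith
  have hcont : ContinuousOn (fun t : ℝ => t ^ (1 - r)) (Set.Icc x (x + 1)) := by
    intro t ht
    exact (Real.continuousAt_rpow_const t (1 - r)
      (Or.inl (lt_of_lt_of_le hx0 ht.1).ne')).continuousWithinAt
  have hderiv : ∀ t ∈ Set.Ioo x (x + 1),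
      HasDerivAt (fun t : ℝ => t ^ (1 - r)) ((1 - r) * t ^ (1 - r - 1)) t := by
    intro t ht
    exact Real.hasDerivAt_rpow_const (Or.inl (hx0.trans ht.1).ne')
  obtain ⟨c, hc, hceq⟩ := exists_hasDerivAt_eq_slope (fun t : ℝ => t ^ (1 - r))
    (fun t => (1 - r) * t ^ (1 - r - 1)) hlt hcont hderiv
  have hc0 : 0 < c := lt_trans hx0 hc.1
  have h1 : (1 - r) * c ^ (1 - r - 1) = (x + 1) ^ (1 - r) - x ^ (1 - r) := by
    rw [hceq]; field_simp; ring
  have h2 : x ^ (1 - r) - (x + 1) ^ (1 - r) = (r - 1) * c ^ (-r) := by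
    have : (1 - r - 1) = -r := by ring
    rw [this] at h1
    linarith [h1]
  rw [h2]
  have : (x + 1) ^ (-r) ≤ c ^ (-r) :=
    Real.rpow_le_rpow_of_nonpos hc0 hc.2.le (by linarith)
  nlinarith [this]

lemma tail_rpow_sum (r : ℝ) (hr : 1 < r) (J : ℕ) (hJ : 1 ≤ J) (M : ℕ) :
    ∑ j ∈ Finset.Ioc J M, (j : ℝ) ^ (-r) ≤ (J : ℝ) ^ (1 - r) / (r - 1) := by
  have hr0 : (0:ℝ) < r - 1 := by linarith
  rcases le_or_gt M J with h | h
  · rw [Finset.Ioc_eq_empty (by omega), Finset.sum_empty]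
    positivity
  · have key : ∀ M : ℕ, J ≤ M →
        ∑ j ∈ Finset.Ioc J M, (j : ℝ) ^ (-r)
          ≤ ((J : ℝ) ^ (1 - r) - (M : ℝ) ^ (1 - r)) / (r - 1) := by
      intro M hM
      induction M, hM using Nat.le_induction with
      | base => rw [Finset.Ioc_self, Finset.sum_empty]; simp
      | succ M hM ih =>
        rw [Finset.sum_Ioc_succ_top (by omega)]
        have hx : (1:ℝ) ≤ (M : ℝ) := by exact_mod_cast hJ.trans hM
        have := step_rpow r hr (M : ℝ) hx
        have hcast : ((M + 1 : ℕ) : ℝ) = (M : ℝ) + 1 := by push_cast; ring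
        rw [hcast]
        calc ∑ j ∈ Finset.Ioc J M, (j:ℝ) ^ (-r) + ((M:ℝ)+1) ^ (-r)
            ≤ ((J:ℝ) ^ (1-r) - (M:ℝ) ^ (1-r)) / (r-1)
              + ((M:ℝ) ^ (1-r) - ((M:ℝ)+1) ^ (1-r)) / (r-1) := by
              apply add_le_add ih
              rw [le_div_iff₀ hr0]; linarith
          _ = ((J:ℝ) ^ (1-r) - ((M:ℝ)+1) ^ (1-r)) / (r-1) := by ring
    have hM0 : (0:ℝ) ≤ (M:ℝ) ^ (1 - r) := by positivity
    calc ∑ j ∈ Finset.Ioc J M, (j : ℝ) ^ (-r)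
        ≤ ((J : ℝ) ^ (1 - r) - (M : ℝ) ^ (1 - r)) / (r - 1) := key M h.le
      _ ≤ (J : ℝ) ^ (1 - r) / (r - 1) := by gcongr; linarith

set_option maxHeartbeats 1600000 in
/-- **Ridge variance sum rate for fast eigenvalue decay** (`ν > 1/2`):
`(1/n)·∑_{i=1}^{min(n,p)} (l_i/(l_i+n^{−θ}))² ≍ n^{(θ−ν)/ν}`. -/
theorem ridge_variance_sum_rate_fast_decay
    (κ₁ κ₂ ν θ k₃ k₄ : ℝ)
    (hκ₁ : 0 < κ₁) (hκ₂ : 0 < κ₂) (hν : 1 / 2 < ν) (hθ : 0 < θ) (hθν : θ ≤ ν)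
    (hk₃ : 0 < k₃) (hk₄ : k₃ ≤ k₄) :
    ∃ c C : ℝ, 0 < c ∧ 0 < C ∧ ∃ n₀ : ℕ, 1 ≤ n₀ ∧
      ∀ (n p : ℕ), n₀ ≤ n →
        k₃ * (n : ℝ) ≤ (p : ℝ) → (p : ℝ) ≤ k₄ * (n : ℝ) →
        ∀ (l : Fin (min n p) → ℝ),
          Antitone l → (∀ i, 0 < l i) →
          (∀ i : Fin (min n p),
            κ₁ * ((i : ℕ) + 1 : ℝ) ^ (-ν) ≤ l i ∧ l i ≤ κ₂ * ((i : ℕ) + 1 : ℝ) ^ (-ν)) →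
          c * (n : ℝ) ^ ((θ - ν) / ν)
              ≤ (n : ℝ)⁻¹ * ∑ i, (l i / (l i + (n : ℝ) ^ (-θ))) ^ 2 ∧
            (n : ℝ)⁻¹ * ∑ i, (l i / (l i + (n : ℝ) ^ (-θ))) ^ 2
              ≤ C * (n : ℝ) ^ ((θ - ν) / ν) := by
  
  have hν0 : (0:ℝ) < ν := by linarith
  set c : ℝ := min (min 1 k₃) (κ₁ ^ (1/ν) / 2) / 4 with hc_def
  set C : ℝ := κ₂ ^ (1/ν) * (1 + 1/(2*ν - 1)) + 1 with hC_def
  have hc0 : 0 < c := by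
    have h1 : (0:ℝ) < min 1 k₃ := lt_min one_pos hk₃
    have h2 : (0:ℝ) < κ₁ ^ (1/ν) / 2 := by positivity
    have := lt_min h1 h2
    positivity
  have hC0 : 0 < C := by
    have h1 : (0:ℝ) < 2*ν - 1 := by linarith
    have h2 : (0:ℝ) < κ₂ ^ (1/ν) := Real.rpow_pos_of_pos hκ₂ _
    have h3 : (0:ℝ) < 1 + 1/(2*ν-1) := by positivity
    positivity
  refine ⟨c, C, hc0, hC0, max 1 ⌈(2 * κ₁ ^ (-(1/ν))) ^ (ν/θ)⌉₊, le_max_left _ _, ?_⟩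
  intro n p hn₀ hpl hpu l hanti hlpos hbound
  have hn1 : 1 ≤ n := le_trans (le_max_left _ _) hn₀
  have hn0 : (0:ℝ) < n := by exact_mod_cast hn1
  have hn1' : (1:ℝ) ≤ n := by exact_mod_cast hn1
  set lam : ℝ := (n:ℝ) ^ (-θ) with hlam_def
  have hlam0 : 0 < lam := Real.rpow_pos_of_pos hn0 _
  set X : ℝ := (n:ℝ) ^ (θ/ν) with hX_def
  have hX0 : 0 < X := Real.rpow_pos_of_pos hn0 _
  have hX1 : 1 ≤ X := by
    have := Real.rpow_le_rpow_of_exponent_le hn1' (show (0:ℝ) ≤ θ/ν by positivity)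
    rwa [Real.rpow_zero] at this
  have hXn : X ≤ (n:ℝ) := by
    have := Real.rpow_le_rpow_of_exponent_le hn1'
      (show θ/ν ≤ 1 by rw [div_le_one hν0]; exact hθν)
    rwa [Real.rpow_one] at this
  have hrate : (n:ℝ) ^ ((θ - ν)/ν) = X * (n:ℝ)⁻¹ := by
    rw [hX_def, ← Real.rpow_neg_one (n:ℝ), ← Real.rpow_add hn0]
    congr 1
    field_simp
    ring
  -- nonnegativity of terms
  have htnn : ∀ i : Fin (min n p), 0 ≤ (l i / (l i + lam)) ^ 2 := fun i => sq_nonneg _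
  constructor
  · -- LOWER BOUND
    set T : ℝ := κ₁ ^ (1/ν) * X with hT_def
    have hT0 : 0 < T := mul_pos (Real.rpow_pos_of_pos hκ₁ _) hX0
    have hT2 : 2 ≤ T := by
      set A : ℝ := 2 * κ₁ ^ (-(1/ν)) with hA_def
      have hA0 : 0 < A := by positivity
      have hnA : A ^ (ν/θ) ≤ (n:ℝ) := by
        have h1 : (⌈A ^ (ν/θ)⌉₊ : ℝ) ≤ (n:ℝ) := by
          exact_mod_cast le_trans (le_max_right _ _) hn₀
        exact le_trans (Nat.le_ceil _) h1
      have hXA : A ≤ X := by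
        have h2 : (A ^ (ν/θ)) ^ (θ/ν) ≤ X := by
          rw [hX_def]
          exact Real.rpow_le_rpow (by positivity) hnA (by positivity)
        rwa [← Real.rpow_mul hA0.le, show (ν/θ) * (θ/ν) = 1 by field_simp,
          Real.rpow_one] at h2
      have hκν : κ₁ ^ (1/ν) * κ₁ ^ (-(1/ν)) = 1 := by
        rw [← Real.rpow_add hκ₁]; simp
      calc (2:ℝ) = κ₁ ^ (1/ν) * A := by
            rw [hA_def, mul_comm 2 _, ← mul_assoc, hκν]; ring
        _ ≤ κ₁ ^ (1/ν) * X := mul_le_mul_of_nonneg_left hXA (by positivity)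
        _ = T := rfl
    set F : ℕ := ⌊T⌋₊ with hF_def
    have hTF : T / 2 ≤ (F:ℝ) := by
      have := Nat.lt_floor_add_one T
      linarith
    set K : ℕ := min (min n p) F with hK_def
    have hterm : ∀ i : Fin (min n p), (i:ℕ) < F → (1/4 : ℝ) ≤ (l i / (l i + lam)) ^ 2 := by
      intro i hi
      have hi1 : ((i:ℕ) + 1 : ℝ) ≤ T := by
        have h1 : ((i:ℕ) + 1 : ℕ) ≤ F := hi
        calc ((i:ℕ) + 1 : ℝ) = (((i:ℕ) + 1 : ℕ) : ℝ) := by push_cast; ring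
          _ ≤ (F:ℝ) := by exact_mod_cast h1
          _ ≤ T := Nat.floor_le hT0.le
      have hip0 : (0:ℝ) < ((i:ℕ) + 1 : ℝ) := by positivity
      have hmono : T ^ (-ν) ≤ ((i:ℕ) + 1 : ℝ) ^ (-ν) :=
        Real.rpow_le_rpow_of_nonpos hip0 hi1 (by linarith)
      have hTν : κ₁ * T ^ (-ν) = lam := by
        rw [hT_def, Real.mul_rpow (by positivity) hX0.le]
        rw [← Real.rpow_mul hκ₁.le, show (1/ν) * (-ν) = -1 by field_simp]
        rw [hX_def, ← Real.rpow_mul hn0.le, show (θ/ν) * (-ν) = -θ by field_simp]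
        rw [Real.rpow_neg_one, hlam_def]
        field_simp
      have hlge : lam ≤ l i := by
        calc lam = κ₁ * T ^ (-ν) := hTν.symm
          _ ≤ κ₁ * ((i:ℕ) + 1 : ℝ) ^ (-ν) := mul_le_mul_of_nonneg_left hmono hκ₁.le
          _ ≤ l i := (hbound i).1
      have hli := hlpos i
      have hhalf : (1/2 : ℝ) ≤ l i / (l i + lam) := by
        rw [le_div_iff₀ (by linarith)]; linarith
      nlinarith [hhalf, sq_nonneg (l i / (l i + lam) - 1/2)]
    have hKm : K ≤ min n p := min_le_left _ _
    have hSK : (K:ℝ) * (1/4) ≤ ∑ i : Fin (min n p), (l i / (l i + lam)) ^ 2 := by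
      set g : Fin K → Fin (min n p) := fun j => ⟨j.1, lt_of_lt_of_le j.2 hKm⟩ with hg_def
      have hginj : Function.Injective g := by
        intro a b hab
        have h : (g a).1 = (g b).1 := congrArg Fin.val hab
        exact Fin.ext (by simpa [hg_def] using h)
      have h1 : (K:ℝ) * (1/4) ≤ ∑ j : Fin K, (l (g j) / (l (g j) + lam)) ^ 2 := by
        have := Finset.card_nsmul_le_sum Finset.univ
          (fun j : Fin K => (l (g j) / (l (g j) + lam)) ^ 2) (1/4 : ℝ)
          (fun j _ => hterm (g j) (lt_of_lt_of_le j.2 (min_le_right _ _)))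
        simpa [Finset.card_univ, nsmul_eq_mul] using this
      have h2 : ∑ j : Fin K, (l (g j) / (l (g j) + lam)) ^ 2
          ≤ ∑ i : Fin (min n p), (l i / (l i + lam)) ^ 2 := by
        have heq := Finset.sum_image
          (f := fun i : Fin (min n p) => (l i / (l i + lam)) ^ 2)
          (g := g) (s := Finset.univ) (fun a _ b _ h => hginj h)
        calc ∑ j : Fin K, (l (g j) / (l (g j) + lam)) ^ 2
            = ∑ i ∈ Finset.univ.image g, (l i / (l i + lam)) ^ 2 := heq.symm
          _ ≤ ∑ i : Fin (min n p), (l i / (l i + lam)) ^ 2 :=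
              Finset.sum_le_sum_of_subset_of_nonneg (Finset.subset_univ _)
                (fun i _ _ => htnn i)
      linarith
    have h41 : 4 * c ≤ min 1 k₃ := by
      rw [hc_def]
      calc 4 * (min (min 1 k₃) (κ₁ ^ (1/ν)/2) / 4)
          = min (min 1 k₃) (κ₁ ^ (1/ν)/2) := by ring
        _ ≤ min 1 k₃ := min_le_left _ _
    have h42 : 4 * c ≤ κ₁ ^ (1/ν) / 2 := by
      rw [hc_def]
      calc 4 * (min (min 1 k₃) (κ₁ ^ (1/ν)/2) / 4)
          = min (min 1 k₃) (κ₁ ^ (1/ν)/2) := by ring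
        _ ≤ κ₁ ^ (1/ν)/2 := min_le_right _ _
    have hm1 : min 1 k₃ * X ≤ min (n:ℝ) (p:ℝ) := by
      apply le_min
      · calc min 1 k₃ * X ≤ 1 * X :=
              mul_le_mul_of_nonneg_right (min_le_left _ _) hX0.le
          _ = X := one_mul X
          _ ≤ (n:ℝ) := hXn
      · calc min 1 k₃ * X ≤ k₃ * X :=
              mul_le_mul_of_nonneg_right (min_le_right _ _) hX0.le
          _ ≤ k₃ * (n:ℝ) := mul_le_mul_of_nonneg_left hXn hk₃.le
          _ ≤ (p:ℝ) := hpl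
    have hm2 : (κ₁ ^ (1/ν) / 2) * X ≤ (F:ℝ) := by
      calc (κ₁ ^ (1/ν) / 2) * X = T / 2 := by rw [hT_def]; ring
        _ ≤ (F:ℝ) := hTF
    have hcast : (K:ℝ) = min (min (n:ℝ) (p:ℝ)) (F:ℝ) := by
      rw [hK_def]; push_cast; rfl
    have hKX : 4 * c * X ≤ (K:ℝ) := by
      rw [hcast]
      refine le_min (le_trans ?_ hm1) (le_trans ?_ hm2)
      · exact mul_le_mul_of_nonneg_right h41 hX0.le
      · exact mul_le_mul_of_nonneg_right h42 hX0.le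
    have hfinal : c * X ≤ ∑ i : Fin (min n p), (l i / (l i + lam)) ^ 2 := by
      calc c * X = (4 * c * X) * (1/4) := by ring
        _ ≤ (K:ℝ) * (1/4) := mul_le_mul_of_nonneg_right hKX (by norm_num)
        _ ≤ _ := hSK
    rw [hrate]
    calc c * (X * (n:ℝ)⁻¹) = (c * X) * (n:ℝ)⁻¹ := by ring
      _ ≤ (∑ i : Fin (min n p), (l i / (l i + lam)) ^ 2) * (n:ℝ)⁻¹ :=
          mul_le_mul_of_nonneg_right hfinal (by positivity)
      _ = (n:ℝ)⁻¹ * ∑ i : Fin (min n p), (l i / (l i + lam)) ^ 2 := by ring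
  · -- UPPER BOUND
    have h2ν : (1:ℝ) < 2*ν := by linarith
    have h2ν0 : (0:ℝ) < 2*ν - 1 := by linarith
    set T' : ℝ := κ₂ ^ (1/ν) * X with hT'_def
    have hT'0 : 0 < T' := mul_pos (Real.rpow_pos_of_pos hκ₂ _) hX0
    have hb0 : (0:ℝ) < κ₂ * (n:ℝ) ^ θ := by positivity
    set a : ℝ := (κ₂ * (n:ℝ) ^ θ) ^ 2 with ha_def
    have ha0 : 0 < a := by positivity
    -- pointwise bound
    have hpt : ∀ i : Fin (min n p),
        (l i / (l i + lam)) ^ 2 ≤ min 1 (a * ((i:ℕ) + 1 : ℝ) ^ (-(2*ν))) := by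
      intro i
      have hli := hlpos i
      have hip0 : (0:ℝ) < ((i:ℕ) + 1 : ℝ) := by positivity
      refine le_min ?_ ?_
      · have h1 : l i / (l i + lam) ≤ 1 := by
          rw [div_le_one (by linarith)]; linarith
        have h0 : 0 ≤ l i / (l i + lam) := div_nonneg hli.le (by linarith)
        calc (l i / (l i + lam)) ^ 2 ≤ 1 ^ 2 := pow_le_pow_left₀ h0 h1 2
          _ = 1 := one_pow 2
      · have h1 : l i / (l i + lam) ≤ l i / lam := by
          rw [div_le_div_iff₀ (by linarith) hlam0]
          nlinarith
        have h2 : l i / lam ≤ κ₂ * ((i:ℕ) + 1 : ℝ) ^ (-ν) / lam := by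
          exact div_le_div_of_nonneg_right (hbound i).2 hlam0.le
        have h3 : κ₂ * ((i:ℕ) + 1 : ℝ) ^ (-ν) / lam
            = κ₂ * (n:ℝ) ^ θ * ((i:ℕ) + 1 : ℝ) ^ (-ν) := by
          rw [hlam_def, Real.rpow_neg hn0.le, div_eq_mul_inv, inv_inv]; ring
        have h4 : (l i / (l i + lam)) ^ 2
            ≤ (κ₂ * (n:ℝ) ^ θ * ((i:ℕ) + 1 : ℝ) ^ (-ν)) ^ 2 := by
          apply pow_le_pow_left₀ (div_nonneg hli.le (by linarith))
          exact h1.trans (h2.trans_eq h3)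
        refine h4.trans_eq ?_
        rw [mul_pow, ha_def]
        congr 1
        rw [← Real.rpow_natCast (((i:ℕ) + 1 : ℝ) ^ (-ν)) 2, ← Real.rpow_mul hip0.le]
        congr 1
        push_cast
        ring
    -- convert to a sum over range
    have hsum1 : ∑ i : Fin (min n p), (l i / (l i + lam)) ^ 2
        ≤ ∑ i ∈ Finset.range (min n p), min 1 (a * ((i:ℕ) + 1 : ℝ) ^ (-(2*ν))) := by
      rw [← Fin.sum_univ_eq_sum_range
        (fun i : ℕ => min 1 (a * ((i:ℕ) + 1 : ℝ) ^ (-(2*ν)))) (min n p)]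
      exact Finset.sum_le_sum (fun i _ => hpt i)
    set J : ℕ := ⌊T'⌋₊ + 1 with hJ_def
    have hJ1 : 1 ≤ J := by omega
    have hJcast : (J:ℝ) = (⌊T'⌋₊ : ℝ) + 1 := by rw [hJ_def]; push_cast; ring
    have hT'J : T' ≤ (J:ℝ) := by
      have := Nat.lt_floor_add_one T'
      rw [hJcast]; linarith
    have hJub : (J:ℝ) ≤ T' + 1 := by
      have := Nat.floor_le hT'0.le
      rw [hJcast]; linarith
    -- split the sum
    have hsplit := Finset.sum_filter_add_sum_filter_not (Finset.range (min n p))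
      (fun i => i + 1 ≤ J) (fun i : ℕ => min 1 (a * ((i:ℕ) + 1 : ℝ) ^ (-(2*ν))))
    have hpart1 : ∑ i ∈ (Finset.range (min n p)).filter (fun i => i + 1 ≤ J),
        min 1 (a * ((i:ℕ) + 1 : ℝ) ^ (-(2*ν))) ≤ (J:ℝ) := by
      calc ∑ i ∈ (Finset.range (min n p)).filter (fun i => i + 1 ≤ J),
            min 1 (a * ((i:ℕ) + 1 : ℝ) ^ (-(2*ν)))
          ≤ ((Finset.range (min n p)).filter (fun i => i + 1 ≤ J)).card • (1:ℝ) :=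
            Finset.sum_le_card_nsmul _ _ 1 (fun i _ => min_le_left _ _)
        _ = (((Finset.range (min n p)).filter (fun i => i + 1 ≤ J)).card : ℝ) := by
            simp
        _ ≤ (J:ℝ) := by
            have hsub : (Finset.range (min n p)).filter (fun i => i + 1 ≤ J)
                ⊆ Finset.range J := by
              intro x hx
              simp only [Finset.mem_filter, Finset.mem_range] at hx ⊢
              omega
            have := Finset.card_le_card hsub
            rw [Finset.card_range] at this
            exact_mod_cast this
    have hpart2 : ∑ i ∈ (Finset.range (min n p)).filter (fun i => ¬(i + 1 ≤ J)),
        min 1 (a * ((i:ℕ) + 1 : ℝ) ^ (-(2*ν))) ≤ T' / (2*ν - 1) := by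
      have step1 : ∑ i ∈ (Finset.range (min n p)).filter (fun i => ¬(i + 1 ≤ J)),
          min 1 (a * ((i:ℕ) + 1 : ℝ) ^ (-(2*ν)))
          ≤ a * ∑ i ∈ (Finset.range (min n p)).filter (fun i => ¬(i + 1 ≤ J)),
            (((i:ℕ) + 1 : ℝ)) ^ (-(2*ν)) := by
        rw [Finset.mul_sum]
        exact Finset.sum_le_sum (fun i _ => min_le_right _ _)
      have step2 : ∑ i ∈ (Finset.range (min n p)).filter (fun i => ¬(i + 1 ≤ J)),
          (((i:ℕ) + 1 : ℝ)) ^ (-(2*ν))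
          ≤ ∑ j ∈ Finset.Ioc J (min n p), (j:ℝ) ^ (-(2*ν)) := by
        have hinj : ∀ x ∈ (Finset.range (min n p)).filter (fun i => ¬(i + 1 ≤ J)),
            ∀ y ∈ (Finset.range (min n p)).filter (fun i => ¬(i + 1 ≤ J)),
            x + 1 = y + 1 → x = y := fun x _ y _ h => by omega
        have heq := Finset.sum_image (f := fun j : ℕ => (j:ℝ) ^ (-(2*ν)))
          (g := fun i : ℕ => i + 1)
          (s := (Finset.range (min n p)).filter (fun i => ¬(i + 1 ≤ J))) hinj
        have hcongr : ∑ i ∈ (Finset.range (min n p)).filter (fun i => ¬(i + 1 ≤ J)),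
            (((i:ℕ) + 1 : ℝ)) ^ (-(2*ν))
            = ∑ i ∈ (Finset.range (min n p)).filter (fun i => ¬(i + 1 ≤ J)),
              (((i + 1 : ℕ)):ℝ) ^ (-(2*ν)) := by
          apply Finset.sum_congr rfl
          intro i _
          congr 1
          push_cast
          ring
        rw [hcongr, ← heq]
        apply Finset.sum_le_sum_of_subset_of_nonneg
        · intro x hx
          simp only [Finset.mem_image, Finset.mem_filter, Finset.mem_range] at hx
          obtain ⟨i, ⟨him, hiJ⟩, hix⟩ := hx
          simp only [Finset.mem_Ioc]
          omega
        · intro j _ _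
          exact Real.rpow_nonneg (Nat.cast_nonneg j) _
      have step3 := tail_rpow_sum (2*ν) h2ν J hJ1 (min n p)
      have step4 : (J:ℝ) ^ (1 - 2*ν) ≤ T' ^ (1 - 2*ν) :=
        Real.rpow_le_rpow_of_nonpos hT'0 hT'J (by linarith)
      have hTν : T' ^ ν = κ₂ * (n:ℝ) ^ θ := by
        rw [hT'_def, Real.mul_rpow (by positivity) hX0.le, ← Real.rpow_mul hκ₂.le,
          show (1/ν)*ν = 1 by field_simp, Real.rpow_one, hX_def,
          ← Real.rpow_mul hn0.le, show (θ/ν)*ν = θ by field_simp]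
      have h6 : T' ^ (1 - 2*ν) = T' * a⁻¹ := by
        rw [show (1 - 2*ν) = 1 + ν * (-2) by ring, Real.rpow_add hT'0, Real.rpow_one]
        congr 1
        rw [Real.rpow_mul hT'0.le, hTν,
          show ((-2):ℝ) = -((2:ℕ):ℝ) by norm_num, Real.rpow_neg hb0.le,
          Real.rpow_natCast, ha_def]
      calc ∑ i ∈ (Finset.range (min n p)).filter (fun i => ¬(i + 1 ≤ J)),
            min 1 (a * ((i:ℕ) + 1 : ℝ) ^ (-(2*ν)))
          ≤ a * ∑ j ∈ Finset.Ioc J (min n p), (j:ℝ) ^ (-(2*ν)) :=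
            step1.trans (mul_le_mul_of_nonneg_left step2 ha0.le)
        _ ≤ a * ((J:ℝ) ^ (1 - 2*ν) / (2*ν - 1)) :=
            mul_le_mul_of_nonneg_left step3 ha0.le
        _ ≤ a * (T' ^ (1 - 2*ν) / (2*ν - 1)) :=
            mul_le_mul_of_nonneg_left (div_le_div_of_nonneg_right step4 h2ν0.le) ha0.le
        _ = T' / (2*ν - 1) := by
            rw [h6]
            field_simp
    -- assemble
    have hS : ∑ i ∈ Finset.range (min n p), min 1 (a * ((i:ℕ) + 1 : ℝ) ^ (-(2*ν)))
        ≤ C * X := by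
      have htot : T' + X + T' / (2*ν - 1) = C * X := by
        rw [hT'_def, hC_def]
        field_simp
        ring
      calc ∑ i ∈ Finset.range (min n p), min 1 (a * ((i:ℕ) + 1 : ℝ) ^ (-(2*ν)))
          = (∑ i ∈ (Finset.range (min n p)).filter (fun i => i + 1 ≤ J),
              min 1 (a * ((i:ℕ) + 1 : ℝ) ^ (-(2*ν))))
            + ∑ i ∈ (Finset.range (min n p)).filter (fun i => ¬(i + 1 ≤ J)),
              min 1 (a * ((i:ℕ) + 1 : ℝ) ^ (-(2*ν))) := hsplit.symm
        _ ≤ (J:ℝ) + T' / (2*ν - 1) := add_le_add hpart1 hpart2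
        _ ≤ (T' + X) + T' / (2*ν - 1) := by
            have : (J:ℝ) ≤ T' + X := hJub.trans (by linarith)
            linarith
        _ = C * X := by rw [← htot]
    rw [hrate]
    calc (n:ℝ)⁻¹ * ∑ i : Fin (min n p), (l i / (l i + lam)) ^ 2
        ≤ (n:ℝ)⁻¹ * (C * X) :=
          mul_le_mul_of_nonneg_left (hsum1.trans hS) (by positivity)
      _ = C * (X * (n:ℝ)⁻¹) := by ring
end

section
/- Ridge variance sum rate for slow eigenvalue decay: Let ν ∈ (0,1/2), 0 < θ < ν, and let l₁ ≥ l₂ ≥ … ≥ l_m > 0 with m = min(n,p) and k₃ n ≤ p ≤ k₄ n, satisfy κ₁ i^{-ν} ≤ l_i ≤ κ₂ i^{-ν} for all i = 1,…,m (constants κ₁, κ₂ > 0, 0 < k₃ ≤ k₄). Then there exist a constant C > 0 and n₀ ≥ 1 depending only on (κ₁, κ₂, ν, θ, k₃, k₄) such that for all n ≥ n₀: (1/n)·∑_{i=1}^{m} ( l_i / (l_i + n^{-θ}) )² ≤ C·( n^{(θ−ν)/ν} + n^{2(θ−ν)} ). -/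
open scoped BigOperators

/-- Telescoping bound: `∑_{i<m} (i+1)^{s-1} ≤ m^s / s` for `0 < s ≤ 1`. -/
lemma sum_rpow_pred_le (m : ℕ) {s : ℝ} (hs : 0 < s) (hs1 : s ≤ 1) :
    ∑ i ∈ Finset.range m, ((i : ℝ) + 1) ^ (s - 1) ≤ (m : ℝ) ^ s / s := by
  have key : ∀ i : ℕ, s * ((i : ℝ) + 1) ^ (s - 1)
      ≤ ((i : ℝ) + 1) ^ s - (i : ℝ) ^ s := by
    intro i
    have hi1 : (0:ℝ) < (i : ℝ) + 1 := by positivity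
    have hz : (-1 : ℝ) ≤ -(1 / ((i : ℝ) + 1)) := by
      rw [neg_le_neg_iff]
      exact div_le_one_of_le₀ (by linarith [Nat.cast_nonneg (α := ℝ) i]) hi1.le
    have h := rpow_one_add_le_one_add_mul_self hz hs.le hs1
    have h1 : (1 : ℝ) + -(1 / ((i : ℝ) + 1)) = (i : ℝ) / ((i : ℝ) + 1) := by
      field_simp
      ring
    rw [h1] at h
    have hdiv : ((i : ℝ) / ((i : ℝ) + 1)) ^ s = (i : ℝ) ^ s / ((i : ℝ) + 1) ^ s := by
      rw [Real.div_rpow (Nat.cast_nonneg i) hi1.le]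
    rw [hdiv] at h
    have hpos : (0:ℝ) < ((i : ℝ) + 1) ^ s := Real.rpow_pos_of_pos hi1 s
    have h2 : (i : ℝ) ^ s ≤ (1 + s * -(1 / ((i : ℝ) + 1))) * ((i : ℝ) + 1) ^ s := by
      rw [← div_le_iff₀ hpos]; exact h
    have h3 : (1 + s * -(1 / ((i : ℝ) + 1))) * ((i : ℝ) + 1) ^ s
        = ((i : ℝ) + 1) ^ s - s * (((i : ℝ) + 1) ^ s / ((i : ℝ) + 1)) := by
      ring
    have h4 : ((i : ℝ) + 1) ^ s / ((i : ℝ) + 1) = ((i : ℝ) + 1) ^ (s - 1) := by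
      rw [Real.rpow_sub hi1, Real.rpow_one]
    rw [h3, h4] at h2
    linarith
  have tele : ∑ i ∈ Finset.range m, (((i : ℝ) + 1) ^ s - (i : ℝ) ^ s)
      = (m : ℝ) ^ s := by
    have := Finset.sum_range_sub (fun i : ℕ => ((i : ℝ)) ^ s) m
    simp only [Nat.cast_add, Nat.cast_one] at this
    rw [this, Nat.cast_zero, Real.zero_rpow hs.ne', sub_zero]
  have hsum : s * ∑ i ∈ Finset.range m, ((i : ℝ) + 1) ^ (s - 1) ≤ (m : ℝ) ^ s := by
    rw [Finset.mul_sum, ← tele]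
    exact Finset.sum_le_sum fun i _ => key i
  rw [le_div_iff₀ hs, mul_comm]
  exact hsum

/-- **Ridge variance sum rate for slow eigenvalue decay** (`ν ∈ (0,1/2)`):
`(1/n)·∑_{i=1}^{min(n,p)} (l_i/(l_i+n^{−θ}))² ≲ n^{(θ−ν)/ν} + n^{2(θ−ν)}`. -/
theorem ridge_variance_sum_rate_slow_decay
    (κ₁ κ₂ ν θ k₃ k₄ : ℝ)
    (hκ₁ : 0 < κ₁) (hκ₂ : 0 < κ₂) (hν : 0 < ν) (hν' : ν < 1 / 2)
    (hθ : 0 < θ) (hθν : θ < ν)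
    (hk₃ : 0 < k₃) (hk₄ : k₃ ≤ k₄) :
    ∃ C : ℝ, 0 < C ∧ ∃ n₀ : ℕ, 1 ≤ n₀ ∧
      ∀ (n p : ℕ), n₀ ≤ n →
        k₃ * (n : ℝ) ≤ (p : ℝ) → (p : ℝ) ≤ k₄ * (n : ℝ) →
        ∀ (l : Fin (min n p) → ℝ),
          Antitone l → (∀ i, 0 < l i) →
          (∀ i : Fin (min n p),
            κ₁ * ((i : ℕ) + 1 : ℝ) ^ (-ν) ≤ l i ∧ l i ≤ κ₂ * ((i : ℕ) + 1 : ℝ) ^ (-ν)) →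
          (n : ℝ)⁻¹ * ∑ i, (l i / (l i + (n : ℝ) ^ (-θ))) ^ 2
            ≤ C * ((n : ℝ) ^ ((θ - ν) / ν) + (n : ℝ) ^ (2 * (θ - ν))) := by
  set s : ℝ := 1 - 2 * ν with hs_def
  have hs : 0 < s := by simp only [hs_def]; linarith
  have hs1 : s ≤ 1 := by simp only [hs_def]; linarith
  refine ⟨κ₂ ^ 2 / s, by positivity, 1, le_refl 1, ?_⟩
  intro n p hn hp1 hp2 l _ hlpos hl
  have hn1 : (1 : ℝ) ≤ (n : ℝ) := by exact_mod_cast hn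
  have hn0 : (0 : ℝ) < (n : ℝ) := by linarith
  have hnt : (0 : ℝ) < (n : ℝ) ^ (-θ) := Real.rpow_pos_of_pos hn0 _
  -- termwise bound
  have hterm : ∀ i : Fin (min n p), (l i / (l i + (n : ℝ) ^ (-θ))) ^ 2
      ≤ κ₂ ^ 2 * (n : ℝ) ^ (2 * θ) * ((i : ℕ) + 1 : ℝ) ^ (s - 1) := by
    intro i
    have hi1 : (0:ℝ) < ((i : ℕ) : ℝ) + 1 := by positivity
    have hnθ : (0:ℝ) < (n : ℝ) ^ θ := Real.rpow_pos_of_pos hn0 _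
    have h1 : l i / (l i + (n : ℝ) ^ (-θ)) ≤ l i / (n : ℝ) ^ (-θ) := by
      apply div_le_div_of_nonneg_left (hlpos i).le hnt
      linarith [hlpos i]
    have h2 : l i / (n : ℝ) ^ (-θ) = l i * (n : ℝ) ^ θ := by
      rw [div_eq_mul_inv, ← Real.rpow_neg hn0.le, neg_neg]
    have h4 : l i / (l i + (n : ℝ) ^ (-θ)) ≤ κ₂ * ((i : ℕ) + 1 : ℝ) ^ (-ν) * (n : ℝ) ^ θ :=
      calc l i / (l i + (n : ℝ) ^ (-θ)) ≤ l i * (n : ℝ) ^ θ := by rw [← h2]; exact h1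
        _ ≤ κ₂ * ((i : ℕ) + 1 : ℝ) ^ (-ν) * (n : ℝ) ^ θ :=
            mul_le_mul_of_nonneg_right (hl i).2 hnθ.le
    have h0 : 0 ≤ l i / (l i + (n : ℝ) ^ (-θ)) :=
      div_nonneg (hlpos i).le (by linarith [hlpos i])
    have e1 : ((((i : ℕ) : ℝ) + 1) ^ (-ν)) ^ 2 = (((i : ℕ) : ℝ) + 1) ^ (s - 1) := by
      rw [← Real.rpow_natCast ((((i : ℕ) : ℝ) + 1) ^ (-ν)) 2, ← Real.rpow_mul hi1.le]
      congr 1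
      push_cast
      simp only [hs_def]; ring
    have e2 : ((n : ℝ) ^ θ) ^ 2 = (n : ℝ) ^ (2 * θ) := by
      rw [← Real.rpow_natCast ((n : ℝ) ^ θ) 2, ← Real.rpow_mul hn0.le]
      congr 1
      push_cast; ring
    calc (l i / (l i + (n : ℝ) ^ (-θ))) ^ 2
        ≤ (κ₂ * ((i : ℕ) + 1 : ℝ) ^ (-ν) * (n : ℝ) ^ θ) ^ 2 := pow_le_pow_left₀ h0 h4 2
      _ = κ₂ ^ 2 * (n : ℝ) ^ (2 * θ) * ((i : ℕ) + 1 : ℝ) ^ (s - 1) := by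
          rw [mul_pow, mul_pow, e1, e2]; ring
  -- sum bound
  have hsum : ∑ i, (l i / (l i + (n : ℝ) ^ (-θ))) ^ 2
      ≤ κ₂ ^ 2 * (n : ℝ) ^ (2 * θ) * ((n : ℝ) ^ s / s) := by
    calc ∑ i, (l i / (l i + (n : ℝ) ^ (-θ))) ^ 2
        ≤ ∑ i : Fin (min n p), κ₂ ^ 2 * (n : ℝ) ^ (2 * θ) * ((i : ℕ) + 1 : ℝ) ^ (s - 1) :=
          Finset.sum_le_sum fun i _ => hterm i
      _ = κ₂ ^ 2 * (n : ℝ) ^ (2 * θ)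
            * ∑ i ∈ Finset.range (min n p), ((i : ℝ) + 1) ^ (s - 1) := by
          rw [Finset.mul_sum, Fin.sum_univ_eq_sum_range
            (fun i => κ₂ ^ 2 * (n : ℝ) ^ (2 * θ) * ((i : ℝ) + 1) ^ (s - 1))]
      _ ≤ κ₂ ^ 2 * (n : ℝ) ^ (2 * θ) * (((min n p : ℕ) : ℝ) ^ s / s) := by
          apply mul_le_mul_of_nonneg_left (sum_rpow_pred_le _ hs hs1) (by positivity)
      _ ≤ κ₂ ^ 2 * (n : ℝ) ^ (2 * θ) * ((n : ℝ) ^ s / s) := by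
          gcongr
          exact min_le_left n p
  have hmain : (n : ℝ)⁻¹ * ∑ i, (l i / (l i + (n : ℝ) ^ (-θ))) ^ 2
      ≤ κ₂ ^ 2 / s * (n : ℝ) ^ (2 * (θ - ν)) := by
    have h5 : (n : ℝ)⁻¹ * (κ₂ ^ 2 * (n : ℝ) ^ (2 * θ) * ((n : ℝ) ^ s / s))
        = κ₂ ^ 2 / s * (n : ℝ) ^ (2 * (θ - ν)) := by
      rw [← Real.rpow_neg_one (n : ℝ)]
      rw [show (2 : ℝ) * (θ - ν) = -1 + (2 * θ + s) by simp only [hs_def]; ring]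
      rw [Real.rpow_add hn0, Real.rpow_add hn0]
      ring
    calc (n : ℝ)⁻¹ * ∑ i, (l i / (l i + (n : ℝ) ^ (-θ))) ^ 2
        ≤ (n : ℝ)⁻¹ * (κ₂ ^ 2 * (n : ℝ) ^ (2 * θ) * ((n : ℝ) ^ s / s)) :=
          mul_le_mul_of_nonneg_left hsum (by positivity)
      _ = κ₂ ^ 2 / s * (n : ℝ) ^ (2 * (θ - ν)) := h5
  refine hmain.trans ?_
  have : (0:ℝ) ≤ (n : ℝ) ^ ((θ - ν) / ν) := (Real.rpow_pos_of_pos hn0 _).le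
  have hC : 0 < κ₂ ^ 2 / s := by positivity
  rw [mul_add]
  linarith [mul_nonneg hC.le this]
end

section
/- Deterministic ridge bias bound: Let X ∈ ℝ^{n×p} be any matrix, ρ > 0, and set B = I_p − (XᵀX + ρ I_p)^{-1} XᵀX. Then the operator norm of the positive semidefinite matrix B (XᵀX) B is at most ρ/4; consequently, for every β ∈ ℝ^p, βᵀ B (XᵀX) B β ≤ (ρ/4)·‖β‖₂². -/
open Matrix

/-- The ℓ₂→ℓ₂ operator (spectral) norm of a square real matrix. -/
noncomputable def l2OpNorm {p : ℕ} (M : Matrix (Fin p) (Fin p) ℝ) : ℝ :=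
  ‖(Matrix.toEuclideanCLM (𝕜 := ℝ) M)‖

private lemma psd_smul' {p : ℕ} {M : Matrix (Fin p) (Fin p) ℝ} (h : M.PosSemidef) {c : ℝ}
    (hc : 0 ≤ c) : (c • M).PosSemidef := by
  refine Matrix.posSemidef_iff_dotProduct_mulVec.mpr ⟨?_, ?_⟩
  · rw [Matrix.IsHermitian, Matrix.conjTranspose_smul, h.1.eq]
    simp
  · intro x
    rw [Matrix.smul_mulVec, dotProduct_smul, smul_eq_mul]
    exact mul_nonneg hc (h.dotProduct_mulVec_nonneg x)

/-- **Deterministic ridge bias bound.** With `B = I − (XᵀX+ρI)⁻¹XᵀX`, the PSD matrix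
`B(XᵀX)B` has operator norm at most `ρ/4`; consequently `βᵀB(XᵀX)Bβ ≤ (ρ/4)‖β‖₂²`
for every `β`. -/
theorem ridge_bias_operator_norm_bound
    {n p : ℕ} (X : Matrix (Fin n) (Fin p) ℝ) (ρ : ℝ) (hρ : 0 < ρ) :
    (Matrix.PosSemidef
        ((((1 : Matrix (Fin p) (Fin p) ℝ)
            - (Xᵀ * X + ρ • (1 : Matrix (Fin p) (Fin p) ℝ))⁻¹ * (Xᵀ * X)) * (Xᵀ * X) *
          ((1 : Matrix (Fin p) (Fin p) ℝ)
            - (Xᵀ * X + ρ • (1 : Matrix (Fin p) (Fin p) ℝ))⁻¹ * (Xᵀ * X))))) ∧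
    l2OpNorm
        ((((1 : Matrix (Fin p) (Fin p) ℝ)
            - (Xᵀ * X + ρ • (1 : Matrix (Fin p) (Fin p) ℝ))⁻¹ * (Xᵀ * X)) * (Xᵀ * X) *
          ((1 : Matrix (Fin p) (Fin p) ℝ)
            - (Xᵀ * X + ρ • (1 : Matrix (Fin p) (Fin p) ℝ))⁻¹ * (Xᵀ * X))))
      ≤ ρ / 4 ∧
    ∀ β : Fin p → ℝ,
      β ⬝ᵥ ((((1 : Matrix (Fin p) (Fin p) ℝ)
            - (Xᵀ * X + ρ • (1 : Matrix (Fin p) (Fin p) ℝ))⁻¹ * (Xᵀ * X)) * (Xᵀ * X) *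
          ((1 : Matrix (Fin p) (Fin p) ℝ)
            - (Xᵀ * X + ρ • (1 : Matrix (Fin p) (Fin p) ℝ))⁻¹ * (Xᵀ * X))) *ᵥ β)
        ≤ ρ / 4 * ∑ i, β i ^ 2 := by
  classical
  set a : Matrix (Fin p) (Fin p) ℝ := Xᵀ * X with ha
  have haPSD : a.PosSemidef := by
    rw [ha, ← Matrix.conjTranspose_eq_transpose_of_trivial]
    exact Matrix.posSemidef_conjTranspose_mul_self X
  have h1PD : ((ρ • 1 : Matrix (Fin p) (Fin p) ℝ)).PosDef := by
    refine Matrix.posDef_iff_dotProduct_mulVec.mpr ⟨?_, ?_⟩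
    · simp [Matrix.IsHermitian]
    · intro x hx
      rw [Matrix.smul_mulVec, dotProduct_smul, smul_eq_mul]
      simp only [Matrix.one_mulVec, star_trivial]
      exact mul_pos hρ (dotProduct_star_self_pos_iff.mpr hx)
  have htPD : (a + ρ • 1).PosDef := Matrix.PosDef.posSemidef_add haPSD h1PD
  set s : Matrix (Fin p) (Fin p) ℝ := (a + ρ • 1)⁻¹ with hs
  have hdet : IsUnit (a + ρ • 1).det := (Matrix.isUnit_iff_isUnit_det _).mp htPD.isUnit
  have hsl : s * (a + ρ • 1) = 1 := Matrix.nonsing_inv_mul _ hdet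
  have hsr : (a + ρ • 1) * s = 1 := Matrix.mul_nonsing_inv _ hdet
  have hsa : s * a = 1 - ρ • s := by
    have h := hsl
    rw [mul_add, mul_smul_comm, mul_one] at h
    exact eq_sub_of_add_eq h
  have has : a * s = 1 - ρ • s := by
    have h := hsr
    rw [add_mul, smul_mul_assoc, one_mul] at h
    exact eq_sub_of_add_eq h
  have haT : aᴴ = a := haPSD.isHermitian.eq
  have hsT : sᴴ = s := (htPD.isHermitian.inv).eq
  -- the bias matrix B and M = B a B
  set B : Matrix (Fin p) (Fin p) ℝ := 1 - s * a with hB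
  have hBT : Bᴴ = B := by
    rw [hB, Matrix.conjTranspose_sub, Matrix.conjTranspose_one, Matrix.conjTranspose_mul,
      haT, hsT, has, hsa]
  set M : Matrix (Fin p) (Fin p) ℝ := B * a * B with hMdef
  have hMPSD : M.PosSemidef := by
    have := haPSD.conjTranspose_mul_mul_same B
    rwa [hBT] at this
  have hMT : Mᴴ = M := hMPSD.isHermitian.eq
  -- algebraic identities
  have hsas : s * a * s = s - ρ • (s * s) := by
    rw [hsa, sub_mul, one_mul, smul_mul_assoc]
  have hBs : B = ρ • s := by rw [hB, hsa, sub_sub_cancel]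
  have hM : M = ρ^2 • s - ρ^3 • (s * s) := by
    rw [hMdef, hBs, smul_mul_assoc, smul_mul_assoc, mul_smul_comm, smul_smul, hsas, smul_sub,
      smul_smul]
    match_scalars <;> ring
  set C : Matrix (Fin p) (Fin p) ℝ := 1 - (2*ρ) • s with hC
  set D : Matrix (Fin p) (Fin p) ℝ := s - (2*ρ) • (s * s) with hD
  set P : Matrix (Fin p) (Fin p) ℝ := 1 - (3*ρ) • s + (2*ρ^2) • (s * s) with hP
  have hCT : Cᴴ = C := by
    rw [hC, Matrix.conjTranspose_sub, Matrix.conjTranspose_one, Matrix.conjTranspose_smul, hsT]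
    simp
  have hsmsT : (s * s)ᴴ = s * s := by rw [Matrix.conjTranspose_mul, hsT]
  have hDT : Dᴴ = D := by
    rw [hD, Matrix.conjTranspose_sub, Matrix.conjTranspose_smul, hsT, hsmsT]
    simp
  have hPT : Pᴴ = P := by
    rw [hP, Matrix.conjTranspose_add, Matrix.conjTranspose_sub, Matrix.conjTranspose_one,
      Matrix.conjTranspose_smul, Matrix.conjTranspose_smul, hsT, hsmsT]
    simp
  have key1 : (ρ/4) • (1 : Matrix (Fin p) (Fin p) ℝ) - M = (ρ/4) • (C * C) := by
    rw [hM, hC]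
    simp only [mul_sub, sub_mul, smul_mul_assoc, mul_smul_comm, smul_smul, smul_sub,
      mul_one, one_mul, mul_assoc]
    match_scalars <;> ring
  have hDa : D * a = P := by
    rw [hD, hP]
    simp only [sub_mul, smul_mul_assoc, mul_assoc, hsa, mul_sub, mul_smul_comm, smul_sub,
      smul_smul, mul_one]
    match_scalars <;> ring
  have key2 : (ρ/4)^2 • (1 : Matrix (Fin p) (Fin p) ℝ) - M * M
      = (ρ^2/16) • (P * P) + (6*ρ^3/16) • (P * D) + (ρ^4/16) • (D * D) := by
    rw [hM, hP, hD]
    simp only [mul_sub, sub_mul, mul_add, add_mul, smul_mul_assoc, mul_smul_comm, smul_smul,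
      smul_sub, smul_add, mul_one, one_mul, mul_assoc]
    match_scalars <;> ring
  -- PSD facts
  have hkey1PSD : ((ρ/4) • (1 : Matrix (Fin p) (Fin p) ℝ) - M).PosSemidef := by
    rw [key1]
    refine psd_smul' ?_ (by positivity)
    have := Matrix.posSemidef_conjTranspose_mul_self C
    rwa [hCT] at this
  have hkey2PSD : ((ρ/4)^2 • (1 : Matrix (Fin p) (Fin p) ℝ) - M * M).PosSemidef := by
    rw [key2]
    have hPP : (P * P).PosSemidef := by
      have := Matrix.posSemidef_conjTranspose_mul_self P
      rwa [hPT] at this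
    have hPD : (P * D).PosSemidef := by
      have := haPSD.conjTranspose_mul_mul_same D
      rwa [hDT, hDa] at this
    have hDD : (D * D).PosSemidef := by
      have := Matrix.posSemidef_conjTranspose_mul_self D
      rwa [hDT] at this
    exact ((psd_smul' hPP (by positivity)).add (psd_smul' hPD (by positivity))).add
      (psd_smul' hDD (by positivity))
  -- quadratic form bound
  have hquad : ∀ β : Fin p → ℝ, β ⬝ᵥ (M *ᵥ β) ≤ ρ / 4 * ∑ i, β i ^ 2 := by
    intro β
    have h0 := hkey1PSD.dotProduct_mulVec_nonneg β
    rw [star_trivial, Matrix.sub_mulVec, dotProduct_sub, Matrix.smul_mulVec,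
      Matrix.one_mulVec, dotProduct_smul, smul_eq_mul, sub_nonneg] at h0
    have hd : β ⬝ᵥ β = ∑ i, β i ^ 2 := by
      simp [dotProduct, pow_two]
    rw [hd] at h0
    exact h0
  refine ⟨hMPSD, ?_, hquad⟩
  -- operator norm bound
  rw [l2OpNorm]
  refine ContinuousLinearMap.opNorm_le_bound _ (by positivity) ?_
  intro x
  set v : Fin p → ℝ := (WithLp.equiv 2 (Fin p → ℝ)) x with hv
  have hxv : x = (WithLp.equiv 2 (Fin p → ℝ)).symm v := by simp [hv]
  have happ : (Matrix.toEuclideanCLM (𝕜 := ℝ) M) x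
      = (WithLp.equiv 2 (Fin p → ℝ)).symm (M *ᵥ v) := by
    rw [hxv]; rfl
  have hnormsq : ∀ w : Fin p → ℝ, ‖(WithLp.equiv 2 (Fin p → ℝ)).symm w‖^2 = w ⬝ᵥ w := by
    intro w
    rw [EuclideanSpace.norm_eq, Real.sq_sqrt (by positivity)]
    simp [dotProduct, pow_two]
  have hMT' : Mᵀ = M := by
    rw [← Matrix.conjTranspose_eq_transpose_of_trivial, hMT]
  have hMv : ‖(Matrix.toEuclideanCLM (𝕜 := ℝ) M) x‖^2 = v ⬝ᵥ ((M * M) *ᵥ v) := by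
    rw [happ, hnormsq]
    have h1 : (M * M) *ᵥ v = M *ᵥ (M *ᵥ v) := by rw [Matrix.mulVec_mulVec]
    have h2 : v ᵥ* M = M *ᵥ v := by
      conv_lhs => rw [← hMT']
      rw [Matrix.vecMul_transpose]
    rw [h1, Matrix.dotProduct_mulVec v M, h2]
  have hxn : ‖x‖^2 = v ⬝ᵥ v := by rw [hxv, hnormsq]
  have h0 := hkey2PSD.dotProduct_mulVec_nonneg v
  rw [star_trivial, Matrix.sub_mulVec, dotProduct_sub, Matrix.smul_mulVec,
    Matrix.one_mulVec, dotProduct_smul, smul_eq_mul, sub_nonneg] at h0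
  have hfin : ‖(Matrix.toEuclideanCLM (𝕜 := ℝ) M) x‖^2 ≤ (ρ/4 * ‖x‖)^2 := by
    rw [hMv, mul_pow, hxn]
    exact h0
  have := Real.sqrt_le_sqrt hfin
  rwa [Real.sqrt_sq (norm_nonneg _), Real.sqrt_sq (by positivity)] at this
end
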